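/- There exists a constant C > 0 such that for every real L ≥ 1 and every integer α ≥ 1, α! Γ(L)/Γ(L+α) ≤ C · α · (α/(L+α))^α · (L/(L+α))^L. -/

import Mathlib

theorem aux_antitone : AntitoneOn (fun x : ℝ => (x+1) * (Real.log (x+1) - Real.log x)) (Set.Ioi 0) := by
  have hderiv : ∀ x ∈ Set.Ioi (0:ℝ), HasDerivAt (fun x : ℝ => (x+1) * (Real.log (x+1) - Real.log x))
      (1 * (Real.log (x+1) - Real.log x) + (x+1) * (1/(x+1) - 1/x)) x := by
    intro x hx
    have hx0 : (0:ℝ) < x := hx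
    have h1 : HasDerivAt (fun x : ℝ => Real.log (x+1)) (1/(x+1)) x := by
      have := (Real.hasDerivAt_log (by linarith : x + 1 ≠ 0)).comp x
        ((hasDerivAt_id x).add_const 1)
      simpa [Function.comp_def] using this
    have h2 : HasDerivAt Real.log (1/x) x := by
      simpa [one_div] using Real.hasDerivAt_log hx0.ne'
    exact ((hasDerivAt_id x).add_const 1).mul (h1.sub h2)
  apply antitoneOn_of_deriv_nonpos (convex_Ioi 0)
  · apply ContinuousOn.mul (by fun_prop)
    apply ContinuousOn.sub
    · exact Real.continuousOn_log.comp (by fun_prop) (fun x hx => by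
        simp only [Set.mem_Ioi] at hx; intro h; simp at h; linarith)
    · exact Real.continuousOn_log.mono (by intro x hx; simp at hx ⊢; exact hx.ne')
  · intro x hx
    rw [interior_Ioi] at hx
    exact ((hderiv x hx).differentiableAt).differentiableWithinAt
  · intro x hx
    rw [interior_Ioi] at hx
    have hx0 : (0:ℝ) < x := hx
    rw [(hderiv x hx).deriv]
    have hlog : Real.log (x+1) - Real.log x ≤ 1/x := by
      rw [← Real.log_div (by linarith) hx0.ne']
      have := Real.log_le_sub_one_of_pos (show (0:ℝ) < (x+1)/x by positivity)
      have h2 : (x+1)/x - 1 = 1/x := by field_simp; ring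
      linarith
    have : (x+1) * (1/(x+1) - 1/x) = -(1/x) := by field_simp; ring
    rw [this]
    nlinarith

theorem key_rpow {a b : ℝ} (ha : 0 < a) (hab : a ≤ b) :
    a ^ (a+1) * (b+1) ^ (b+1) ≤ (a+1) ^ (a+1) * b ^ (b+1) := by
  have hb : 0 < b := lt_of_lt_of_le ha hab
  have h := aux_antitone (Set.mem_Ioi.2 ha) (Set.mem_Ioi.2 hb) hab
  simp only at h
  -- (b+1)*(log(b+1)-log b) ≤ (a+1)*(log(a+1)-log a)
  have h1 : ((b+1)/b) ^ (b+1) ≤ ((a+1)/a) ^ (a+1) := by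
    rw [Real.rpow_def_of_pos (by positivity), Real.rpow_def_of_pos (by positivity)]
    apply Real.exp_le_exp.2
    rw [Real.log_div (by linarith) hb.ne', Real.log_div (by linarith) ha.ne']
    linear_combination h
  rw [Real.div_rpow (by linarith) hb.le, Real.div_rpow (by linarith) ha.le,
    div_le_div_iff₀ (by positivity) (by positivity)] at h1
  nlinarith [h1]


/-- Stirling-type bound for the ratio `α! Γ(L) / Γ(L+α)`. -/
theorem factorial_gamma_ratio_bound :
    ∃ C > 0, ∀ L : ℝ, 1 ≤ L → ∀ α : ℕ, 1 ≤ α →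
      (α.factorial : ℝ) * Real.Gamma L / Real.Gamma (L + α) ≤
        C * α * ((α / (L + α)) ^ α) * (L / (L + α)) ^ L := by
  refine ⟨2 * Real.exp 1, by positivity, fun L hL α hα => ?_⟩
  have hL0 : (0:ℝ) < L := by linarith
  have hΓL : 0 < Real.Gamma L := Real.Gamma_pos_of_pos hL0
  induction α, hα using Nat.le_induction with
  | base =>
    have hΓ : Real.Gamma (L + (1:ℕ)) = L * Real.Gamma L := by
      push_cast
      rw [Real.Gamma_add_one hL0.ne']
    have hrpow : Real.exp (-1) ≤ (L/(L+1)) ^ L := by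
      rw [Real.rpow_def_of_pos (by positivity)]
      apply Real.exp_le_exp.2
      have h1 : Real.log ((L+1)/L) ≤ 1/L := by
        have h2 := Real.log_le_sub_one_of_pos (show (0:ℝ) < (L+1)/L by positivity)
        have h3 : (L+1)/L - 1 = 1/L := by field_simp; ring
        linarith
      have h4 : Real.log (L/(L+1)) = -(Real.log ((L+1)/L)) := by
        rw [← Real.log_inv]
        congr 1
        rw [inv_div]
      rw [h4]
      have h5 : L * Real.log ((L+1)/L) ≤ 1 := by
        calc L * Real.log ((L+1)/L) ≤ L * (1/L) := by
              apply mul_le_mul_of_nonneg_left h1 hL0.le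
          _ = 1 := by field_simp
      nlinarith
    rw [hΓ]
    push_cast
    rw [pow_one]
    have lhs_eq : ((Nat.factorial 1 : ℕ) : ℝ) * Real.Gamma L / (L * Real.Gamma L) = 1/L := by
      norm_num [Nat.factorial]
      field_simp
    rw [lhs_eq]
    calc (1:ℝ)/L ≤ 2/(L+1) := by
          rw [div_le_div_iff₀ hL0 (by positivity)]; linarith
      _ = 2 * Real.exp 1 * 1 * (1/(L+1)) * Real.exp (-1) := by
          have he : Real.exp 1 * Real.exp (-1) = 1 := by rw [← Real.exp_add]; norm_num
          linear_combination (-(2 / (L+1))) * he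
      _ ≤ 2 * Real.exp 1 * 1 * (1/(L+1)) * (L/(L+1)) ^ L := by
          apply mul_le_mul_of_nonneg_left hrpow (by positivity)
  | succ n hn ih =>
    have hN1 : (1:ℝ) ≤ (n:ℝ) := by exact_mod_cast hn
    have hN0 : (0:ℝ) < (n:ℝ) := by linarith
    set N : ℝ := (n:ℝ) with hNdef
    set s : ℝ := L + N with hsdef
    have hs0 : (0:ℝ) < s := by positivity
    have hΓs : 0 < Real.Gamma s := Real.Gamma_pos_of_pos hs0
    have hΓsucc : Real.Gamma (L + ((n:ℕ)+1:ℕ)) = s * Real.Gamma s := by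
      push_cast
      rw [show L + (N + 1) = (L + N) + 1 by ring, Real.Gamma_add_one hs0.ne']
    have hfac : (((n+1).factorial : ℕ) : ℝ) = (N+1) * (n.factorial : ℝ) := by
      rw [Nat.factorial_succ]; push_cast; ring
    have hLHS : (((n+1).factorial : ℕ) : ℝ) * Real.Gamma L / Real.Gamma (L + ((n:ℕ)+1:ℕ)) =
        (N+1)/s * ((n.factorial : ℝ) * Real.Gamma L / Real.Gamma s) := by
      rw [hΓsucc, hfac]
      field_simp
    rw [hLHS]
    have step1 : (N+1)/s * ((n.factorial : ℝ) * Real.Gamma L / Real.Gamma s) ≤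
        (N+1)/s * (2 * Real.exp 1 * N * ((N/s)^(n:ℕ)) * (L/s)^L) := by
      apply mul_le_mul_of_nonneg_left ih (by positivity)
    refine le_trans step1 ?_
    -- algebra inequality
    have hkey := key_rpow hN0 (show N ≤ s by simp [hsdef]; linarith)
    have hcast : L + ((n:ℕ)+1:ℕ) = s + 1 := by push_cast; ring
    have hNcast : (((n:ℕ)+1:ℕ) : ℝ) = N + 1 := by push_cast; ring
    rw [hcast, hNcast]
    -- rewrite nat pows as rpows
    rw [show ((N/s)^(n:ℕ) : ℝ) = (N/s) ^ (N:ℝ) from (Real.rpow_natCast _ n).symm,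
        show (((N+1)/(s+1))^((n:ℕ)+1) : ℝ) = ((N+1)/(s+1)) ^ (N+1 : ℝ) by
          rw [← Real.rpow_natCast _ (n+1)]; push_cast; ring_nf; rfl]
    rw [Real.div_rpow hN0.le hs0.le,
        Real.div_rpow (show (0:ℝ) ≤ N+1 by linarith) (show (0:ℝ) ≤ s+1 by linarith),
        Real.div_rpow hL0.le hs0.le, Real.div_rpow hL0.le (show (0:ℝ) ≤ s+1 by linarith)]
    -- key in expanded form
    have es : s ^ (s+1) = s ^ (N:ℝ) * s ^ L * s := by
      rw [show s + 1 = N + L + 1 by rw [hsdef]; ring]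
      rw [Real.rpow_add hs0, Real.rpow_add hs0, Real.rpow_one]
    have es1 : (s+1) ^ (s+1) = (s+1) ^ (N+1 : ℝ) * (s+1) ^ L := by
      rw [show s + 1 = (N+1) + L by rw [hsdef]; ring]
      rw [Real.rpow_add (by linarith)]
    have eN : N ^ (N+1 : ℝ) = N ^ (N:ℝ) * N := Real.rpow_add_one hN0.ne' N
    rw [es, es1, eN] at hkey
    have hdiv : N ^ (N:ℝ) * N / (s ^ (N:ℝ) * s ^ L * s) ≤
        (N+1) ^ (N+1:ℝ) / ((s+1) ^ (N+1:ℝ) * (s+1) ^ L) := by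
      rw [div_le_div_iff₀ (by positivity) (by positivity)]
      nlinarith [hkey]
    calc (N+1)/s * (2 * Real.exp 1 * N * (N ^ (N:ℝ) / s ^ (N:ℝ)) * (L ^ L / s ^ L))
        = (2 * Real.exp 1 * (N+1) * L ^ L) * (N ^ (N:ℝ) * N / (s ^ (N:ℝ) * s ^ L * s)) := by
          field_simp
      _ ≤ (2 * Real.exp 1 * (N+1) * L ^ L) * ((N+1) ^ (N+1:ℝ) / ((s+1) ^ (N+1:ℝ) * (s+1) ^ L)) := by
          apply mul_le_mul_of_nonneg_left hdiv (by positivity)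
      _ = 2 * Real.exp 1 * (N+1) * ((N+1) ^ (N+1:ℝ) / (s+1) ^ (N+1:ℝ)) * (L ^ L / (s+1) ^ L) := by
          field_simp
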